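/- Let P and Q : ℝ → ℝ be two continuous functions such that for every ε > 0 there exists M > 0 with |P(s)| ≤ ε|Q(s)| whenever |s| ≥ M, and for every ε > 0 there exists δ > 0 with |P(s)| ≤ ε|Q(s)| whenever |s| ≤ δ. Let {v_j}_j, v and w be Lebesgue-measurable functions from ℝ^N to ℝ, with w bounded, such that sup_j ∫_{ℝ^N} |Q(v_j(x)) w(x)| dx < +∞, P(v_j(x)) → v(x) for almost every x ∈ ℝ^N, and for every ε > 0 there exists R > 0 such that |v_j(x)| ≤ ε for all j and all |x| ≥ R. Then ∫_{ℝ^N} |(P(v_j(x)) − v(x)) w(x)| dx → 0 as j → ∞. -/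

import Mathlib

open Filter Set MeasureTheory

/-- Strauss-type compactness lemma, global version. -/
theorem stmt7 (N : ℕ) (hN : 1 ≤ N) (P Q : ℝ → ℝ)
    (hP : Continuous P) (hQ : Continuous Q)
    (hPQtop : ∀ ε > (0 : ℝ), ∃ M > (0 : ℝ), ∀ s : ℝ, M ≤ |s| → |P s| ≤ ε * |Q s|)
    (hPQzero : ∀ ε > (0 : ℝ), ∃ δ > (0 : ℝ), ∀ s : ℝ, |s| ≤ δ → |P s| ≤ ε * |Q s|)
    (v : ℕ → EuclideanSpace ℝ (Fin N) → ℝ) (vlim w : EuclideanSpace ℝ (Fin N) → ℝ)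
    (hv : ∀ j, Measurable (v j)) (hvlim : Measurable vlim) (hw : Measurable w)
    (hwb : ∃ Cw : ℝ, ∀ x, |w x| ≤ Cw)
    (hsup : ∃ C : ENNReal, C ≠ ⊤ ∧ ∀ j,
      (∫⁻ x, ENNReal.ofReal |Q (v j x) * w x| ∂volume) ≤ C)
    (hae : ∀ᵐ x ∂(volume : Measure (EuclideanSpace ℝ (Fin N))),
      Filter.Tendsto (fun j => P (v j x)) Filter.atTop (nhds (vlim x)))
    (hdecay : ∀ ε > (0 : ℝ), ∃ R > (0 : ℝ), ∀ j, ∀ x : EuclideanSpace ℝ (Fin N),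
      R ≤ ‖x‖ → |v j x| ≤ ε) :
    Filter.Tendsto
      (fun j => ∫⁻ x, ENNReal.ofReal |(P (v j x) - vlim x) * w x| ∂volume)
      Filter.atTop (nhds 0) := by
  classical
  obtain ⟨Cw, hCw⟩ := hwb
  have hCw0 : 0 ≤ Cw := le_trans (abs_nonneg _) (hCw 0)
  obtain ⟨C, hCtop, hC⟩ := hsup
  set f : EuclideanSpace ℝ (Fin N) → ℝ := fun x => vlim x * w x with hfdef
  -- measurability
  have mPj : ∀ j, Measurable fun x => P (v j x) * w x :=
    fun j => (hP.measurable.comp (hv j)).mul hw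
  have mQj : ∀ j, Measurable fun x => Q (v j x) * w x :=
    fun j => (hQ.measurable.comp (hv j)).mul hw
  have mf : Measurable f := hvlim.mul hw
  -- key pointwise bound
  have key : ∀ ε > (0:ℝ), ∃ CM ≥ (0:ℝ), ∃ R > (0:ℝ), ∀ j x,
      |P (v j x) * w x| ≤ ε * |Q (v j x) * w x|
        + Set.indicator (Metric.ball (0 : EuclideanSpace ℝ (Fin N)) R)
            (fun _ => CM * Cw) x := by
    intro ε hε
    obtain ⟨M, hM0, hM⟩ := hPQtop ε hε
    obtain ⟨δ, hδ0, hδ⟩ := hPQzero ε hε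
    obtain ⟨R, hR0, hR⟩ := hdecay δ hδ0
    obtain ⟨CM0, hCM0⟩ :=
      (isCompact_Icc (a := -M) (b := M)).exists_bound_of_continuousOn hP.continuousOn
    refine ⟨max CM0 0, le_max_right _ _, R, hR0, ?_⟩
    intro j x
    by_cases hcase : |P (v j x)| ≤ ε * |Q (v j x)|
    · have h1 : |P (v j x) * w x| ≤ ε * |Q (v j x) * w x| := by
        rw [abs_mul, abs_mul]
        calc |P (v j x)| * |w x| ≤ (ε * |Q (v j x)|) * |w x| :=
              mul_le_mul_of_nonneg_right hcase (abs_nonneg _)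
          _ = ε * (|Q (v j x)| * |w x|) := by ring
      refine h1.trans (le_add_of_nonneg_right ?_)
      exact Set.indicator_nonneg (fun _ _ => mul_nonneg (le_max_right _ _) hCw0) x
    · have hδlt : δ < |v j x| := by
        by_contra h; push_neg at h; exact hcase (hδ _ h)
      have hxR : ‖x‖ < R := by
        by_contra h; push_neg at h
        exact absurd (hR j x h) (not_le.mpr hδlt)
      have hMlt : |v j x| < M := by
        by_contra h; push_neg at h; exact hcase (hM _ h)
      have hPbd : |P (v j x)| ≤ max CM0 0 := by
        have hmem : v j x ∈ Set.Icc (-M) M := abs_le.mp hMlt.le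
        have := hCM0 _ hmem
        exact le_max_of_le_left (by simpa using this)
      have hind : Set.indicator (Metric.ball (0 : EuclideanSpace ℝ (Fin N)) R)
          (fun _ => max CM0 0 * Cw) x = max CM0 0 * Cw := by
        rw [Set.indicator_of_mem (by simpa [Metric.mem_ball, dist_zero_right] using hxR)]
      rw [hind, abs_mul]
      have hb : |P (v j x)| * |w x| ≤ max CM0 0 * Cw :=
        mul_le_mul hPbd (hCw x) (abs_nonneg _) (le_max_right _ _)
      nlinarith [abs_nonneg (Q (v j x) * w x), mul_nonneg hε.le (abs_nonneg (Q (v j x) * w x))]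
  -- conversion of key to ENNReal
  have toE : ∀ (ε CM R : ℝ), 0 ≤ ε →
      (∀ j x, |P (v j x) * w x| ≤ ε * |Q (v j x) * w x|
        + Set.indicator (Metric.ball (0 : EuclideanSpace ℝ (Fin N)) R)
            (fun _ => CM * Cw) x) →
      ∀ j x, ENNReal.ofReal |P (v j x) * w x|
        ≤ ENNReal.ofReal ε * ENNReal.ofReal |Q (v j x) * w x|
          + Set.indicator (Metric.ball (0 : EuclideanSpace ℝ (Fin N)) R)
            (fun _ => ENNReal.ofReal (CM * Cw)) x := by
    intro ε CM R hε hkey j x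
    refine (ENNReal.ofReal_le_ofReal (hkey j x)).trans ?_
    refine (ENNReal.ofReal_add_le).trans ?_
    gcongr
    · rw [ENNReal.ofReal_mul hε]
    · by_cases hx : x ∈ Metric.ball (0 : EuclideanSpace ℝ (Fin N)) R
      · rw [Set.indicator_of_mem hx, Set.indicator_of_mem hx]
      · rw [Set.indicator_of_notMem hx, Set.indicator_of_notMem hx]; simp
  -- uniform L¹ bound on P(v j)·w
  obtain ⟨C1, hC10, R1, hR10, hkey1r⟩ := key 1 one_pos
  have hkey1 := toE 1 C1 R1 zero_le_one hkey1r
  set D : ENNReal := C + ENNReal.ofReal (C1 * Cw) *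
      volume (Metric.ball (0 : EuclideanSpace ℝ (Fin N)) R1) with hDdef
  have hDtop : D ≠ ⊤ :=
    ENNReal.add_ne_top.mpr ⟨hCtop,
      ENNReal.mul_ne_top ENNReal.ofReal_ne_top measure_ball_lt_top.ne⟩
  have HjD : ∀ j, (∫⁻ x, ENNReal.ofReal |P (v j x) * w x| ∂volume) ≤ D := by
    intro j
    calc (∫⁻ x, ENNReal.ofReal |P (v j x) * w x| ∂volume)
        ≤ ∫⁻ x, ENNReal.ofReal 1 * ENNReal.ofReal |Q (v j x) * w x|
            + Set.indicator (Metric.ball (0 : EuclideanSpace ℝ (Fin N)) R1)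
              (fun _ => ENNReal.ofReal (C1 * Cw)) x ∂volume :=
          lintegral_mono (fun x => hkey1 j x)
      _ = ENNReal.ofReal 1 * (∫⁻ x, ENNReal.ofReal |Q (v j x) * w x| ∂volume)
            + ENNReal.ofReal (C1 * Cw) *
              volume (Metric.ball (0 : EuclideanSpace ℝ (Fin N)) R1) := by
          rw [lintegral_add_left (((mQj j).abs.ennreal_ofReal).const_mul _),
            lintegral_const_mul _ ((mQj j).abs.ennreal_ofReal),
            lintegral_indicator_const measurableSet_ball]
      _ ≤ D := by
          rw [hDdef]
          gcongr
          simpa using hC j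
  -- f is integrable with the same bound, by Fatou
  have hfae : ∀ᵐ x ∂(volume : Measure (EuclideanSpace ℝ (Fin N))),
      Filter.Tendsto (fun j => P (v j x) * w x) Filter.atTop (nhds (f x)) := by
    filter_upwards [hae] with x hx
    exact hx.mul_const (w x)
  have hfD : (∫⁻ x, ENNReal.ofReal |f x| ∂volume) ≤ D := by
    have heq : ∀ᵐ x ∂(volume : Measure (EuclideanSpace ℝ (Fin N))),
        ENNReal.ofReal |f x|
          = Filter.liminf (fun j => ENNReal.ofReal |P (v j x) * w x|) Filter.atTop := by
      filter_upwards [hfae] with x hx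
      exact ((ENNReal.continuous_ofReal.tendsto _).comp
        ((continuous_abs.tendsto _).comp hx)).liminf_eq.symm
    calc (∫⁻ x, ENNReal.ofReal |f x| ∂volume)
        = ∫⁻ x, Filter.liminf (fun j => ENNReal.ofReal |P (v j x) * w x|) Filter.atTop
            ∂volume := lintegral_congr_ae heq
      _ ≤ Filter.liminf (fun j => ∫⁻ x, ENNReal.ofReal |P (v j x) * w x| ∂volume)
            Filter.atTop :=
          lintegral_liminf_le (fun j => (mPj j).abs.ennreal_ofReal)
      _ ≤ D := by
          refine Filter.liminf_le_of_le (by isBoundedDefault) ?_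
          intro b hb
          obtain ⟨j, hj⟩ := hb.exists
          exact hj.trans (HjD j)
  -- main argument
  rw [ENNReal.tendsto_atTop_zero]
  intro η hη
  set r : ENNReal := min η 1 with hrdef
  have hr0 : 0 < r := lt_min hη one_pos
  have hrtop : r ≠ ⊤ := by
    rw [hrdef]
    exact ne_top_of_le_ne_top (by norm_num) (min_le_right _ _)
  have hrt : 0 < r.toReal := ENNReal.toReal_pos hr0.ne' hrtop
  set ε : ℝ := r.toReal / (2 * (C.toReal + 1)) with hεdef
  have hε0 : 0 < ε := by
    apply div_pos hrt; positivity
  obtain ⟨CM, hCM0, R, hR0, hkeyr⟩ := key ε hε0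
  have hkeyE := toE ε CM R hε0.le hkeyr
  -- dominating function
  set g : EuclideanSpace ℝ (Fin N) → ENNReal := fun x =>
    ENNReal.ofReal |f x| + Set.indicator (Metric.ball (0 : EuclideanSpace ℝ (Fin N)) R)
      (fun _ => ENNReal.ofReal (CM * Cw)) x with hgdef
  have hgfin : (∫⁻ x, g x ∂volume) ≠ ⊤ := by
    rw [hgdef]
    simp only
    rw [lintegral_add_left mf.abs.ennreal_ofReal,
      lintegral_indicator_const measurableSet_ball]
    exact ENNReal.add_ne_top.mpr ⟨(hfD.trans_lt hDtop.lt_top).ne,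
      ENNReal.mul_ne_top ENNReal.ofReal_ne_top measure_ball_lt_top.ne⟩
  -- the excess part W
  set W : ℕ → EuclideanSpace ℝ (Fin N) → ℝ := fun j x =>
    max (|P (v j x) * w x - f x| - ε * |Q (v j x) * w x|) 0 with hWdef
  have mW : ∀ j, Measurable fun x => ENNReal.ofReal (W j x) := fun j =>
    ((((mPj j).sub mf).abs.sub
      (measurable_const.mul (mQj j).abs)).max measurable_const).ennreal_ofReal
  have hWbound : ∀ j, (fun x => ENNReal.ofReal (W j x)) ≤ᵐ[volume] g := by
    intro j
    refine Filter.Eventually.of_forall (fun x => ?_)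
    have hind0 : (0:ℝ) ≤ Set.indicator
        (Metric.ball (0 : EuclideanSpace ℝ (Fin N)) R) (fun _ => CM * Cw) x :=
      Set.indicator_nonneg (fun _ _ => mul_nonneg hCM0 hCw0) x
    have hWle : W j x ≤ |f x| + Set.indicator
        (Metric.ball (0 : EuclideanSpace ℝ (Fin N)) R) (fun _ => CM * Cw) x := by
      rw [hWdef]
      apply max_le _ (by positivity)
      have h1 : |P (v j x) * w x - f x| ≤ |P (v j x) * w x| + |f x| := abs_sub _ _
      have h2 := hkeyr j x
      linarith
    calc ENNReal.ofReal (W j x)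
        ≤ ENNReal.ofReal (|f x| + Set.indicator
            (Metric.ball (0 : EuclideanSpace ℝ (Fin N)) R) (fun _ => CM * Cw) x) :=
          ENNReal.ofReal_le_ofReal hWle
      _ ≤ ENNReal.ofReal |f x| + ENNReal.ofReal (Set.indicator
            (Metric.ball (0 : EuclideanSpace ℝ (Fin N)) R) (fun _ => CM * Cw) x) :=
          ENNReal.ofReal_add_le
      _ ≤ g x := by
          simp only [hgdef]
          gcongr
          by_cases hx : x ∈ Metric.ball (0 : EuclideanSpace ℝ (Fin N)) R
          · rw [Set.indicator_of_mem hx, Set.indicator_of_mem hx]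
          · rw [Set.indicator_of_notMem hx, Set.indicator_of_notMem hx]; simp
  -- W j → 0 a.e.
  have hWlim : ∀ᵐ x ∂(volume : Measure (EuclideanSpace ℝ (Fin N))),
      Filter.Tendsto (fun j => ENNReal.ofReal (W j x)) Filter.atTop (nhds 0) := by
    filter_upwards [hfae] with x hx
    have h0 : Filter.Tendsto (fun j => W j x) Filter.atTop (nhds 0) := by
      apply squeeze_zero (fun j => le_max_right _ _) (g := fun j => |P (v j x) * w x - f x|)
      · intro j
        apply max_le _ (abs_nonneg _)
        have : 0 ≤ ε * |Q (v j x) * w x| := mul_nonneg hε0.le (abs_nonneg _)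
        linarith
      · have h1 := hx.sub_const (f x)
        rw [sub_self] at h1
        have h2 := (continuous_abs.tendsto (0:ℝ)).comp h1
        simpa [Function.comp_def] using h2
    have := (ENNReal.continuous_ofReal.tendsto 0).comp h0
    simpa [Function.comp_def] using this
  -- dominated convergence for W
  have hWint : Filter.Tendsto (fun j => ∫⁻ x, ENNReal.ofReal (W j x) ∂volume)
      Filter.atTop (nhds 0) := by
    have := tendsto_lintegral_of_dominated_convergence g mW hWbound hgfin hWlim
    simpa using this
  -- extract eventual smallness
  have hhalf : 0 < ENNReal.ofReal (r.toReal / 2) := by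
    rw [ENNReal.ofReal_pos]; positivity
  obtain ⟨J, hJ⟩ := (ENNReal.tendsto_atTop_zero.mp hWint) _ hhalf
  refine ⟨J, fun j hj => ?_⟩
  -- pointwise: |f_j - f| ≤ W + ε |Q w|
  have hpt : ∀ x, ENNReal.ofReal |(P (v j x) - vlim x) * w x|
      ≤ ENNReal.ofReal (W j x) + ENNReal.ofReal ε * ENNReal.ofReal |Q (v j x) * w x| := by
    intro x
    have heq : (P (v j x) - vlim x) * w x = P (v j x) * w x - f x := by
      rw [hfdef]; ring
    rw [heq]
    have hre : |P (v j x) * w x - f x| ≤ W j x + ε * |Q (v j x) * w x| := by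
      rw [hWdef]
      have := le_max_left (|P (v j x) * w x - f x| - ε * |Q (v j x) * w x|) 0
      linarith
    refine (ENNReal.ofReal_le_ofReal hre).trans ?_
    refine ENNReal.ofReal_add_le.trans ?_
    gcongr
    rw [ENNReal.ofReal_mul hε0.le]
  calc (∫⁻ x, ENNReal.ofReal |(P (v j x) - vlim x) * w x| ∂volume)
      ≤ ∫⁻ x, ENNReal.ofReal (W j x)
          + ENNReal.ofReal ε * ENNReal.ofReal |Q (v j x) * w x| ∂volume :=
        lintegral_mono hpt
    _ = (∫⁻ x, ENNReal.ofReal (W j x) ∂volume)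
          + ENNReal.ofReal ε * (∫⁻ x, ENNReal.ofReal |Q (v j x) * w x| ∂volume) := by
        rw [lintegral_add_left (mW j), lintegral_const_mul _ ((mQj j).abs.ennreal_ofReal)]
    _ ≤ ENNReal.ofReal (r.toReal / 2) + ENNReal.ofReal ε * C := by
        gcongr
        exacts [hJ j hj, hC j]
    _ ≤ ENNReal.ofReal (r.toReal / 2) + ENNReal.ofReal (r.toReal / 2) := by
        gcongr
        calc ENNReal.ofReal ε * C = ENNReal.ofReal ε * ENNReal.ofReal C.toReal := by
              rw [ENNReal.ofReal_toReal hCtop]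
          _ = ENNReal.ofReal (ε * C.toReal) := (ENNReal.ofReal_mul hε0.le).symm
          _ ≤ ENNReal.ofReal (r.toReal / 2) := by
              apply ENNReal.ofReal_le_ofReal
              rw [hεdef]
              rw [div_mul_eq_mul_div, div_le_div_iff₀ (by positivity) (by norm_num)]
              nlinarith [ENNReal.toReal_nonneg (a := C)]
    _ = ENNReal.ofReal r.toReal := by
        rw [← ENNReal.ofReal_add (by positivity) (by positivity)]
        norm_num
    _ = r := ENNReal.ofReal_toReal hrtop
    _ ≤ η := min_le_left _ _
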